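/- For σ ∈ D_n written as σ = τπ with π ∈ S_n and τ ∈ T = {τ ∈ D_n : des(τ) = 0}, the statistics Σ_{i∈DNeg(τπ)} τπ(i) = Σ_{i∈DNeg(τ)} τ(i) and dneg(τπ) = dneg(τ) are independent of π; moreover D_n is the disjoint union over π ∈ S_n of the cosets {τπ : τ ∈ T}. -/

import Mathlib

open Finset

noncomputable section
open scoped Classical

/-- A signed permutation of `[n]` in window notation: an unsigned permutation together with
a sign vector; the window entry at `i` is `±(p i + 1)` (1-based values in `±{1,…,n}`). -/
abbrev SignedPerm (n : ℕ) := Equiv.Perm (Fin n) × (Fin n → Bool)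

/-- The window entry `σ(i) ∈ ℤ` of a signed permutation. -/
def win {n : ℕ} (σ : SignedPerm n) (i : Fin n) : ℤ :=
  if σ.2 i then -(((σ.1 i).1 : ℤ) + 1) else ((σ.1 i).1 : ℤ) + 1

/-- `neg(σ) = #{i : σ(i) < 0}`. -/
def negc {n : ℕ} (σ : SignedPerm n) : ℕ :=
  (Finset.univ.filter (fun i => win σ i < 0)).card

/-- Type `A` descent set of the window. -/
def desSetB {n : ℕ} (σ : SignedPerm n) : Finset (Fin n) :=
  Finset.univ.filter (fun i => ∃ h : i.1 + 1 < n, win σ ⟨i.1 + 1, h⟩ < win σ i)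

/-- Type `A` descent number of the window. -/
def desB {n : ℕ} (σ : SignedPerm n) : ℕ := (desSetB σ).card

/-- Type `A` major index of the window (1-based positions). -/
def majB {n : ℕ} (σ : SignedPerm n) : ℕ := ∑ i ∈ desSetB σ, (i.1 + 1)

/-- Excedance set of an (unsigned) permutation. -/
def excSetP {n : ℕ} (p : Equiv.Perm (Fin n)) : Finset (Fin n) :=
  Finset.univ.filter (fun i => i.1 < (p i).1)

/-- Excedance number of a permutation. -/
def excP {n : ℕ} (p : Equiv.Perm (Fin n)) : ℕ := (excSetP p).card

/-- Han's/Denert's statistic on `S_n`: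
`denh(p) = Σ_{i∈Exc(p)} i + inv(E(p)) + inv(N(p))`. -/
def denhP {n : ℕ} (p : Equiv.Perm (Fin n)) : ℕ :=
  (∑ i ∈ excSetP p, (i.1 + 1)) +
    (Finset.univ.filter (fun q : Fin n × Fin n => q.1 < q.2 ∧
      q.1.1 < (p q.1).1 ∧ q.2.1 < (p q.2).1 ∧ p q.2 < p q.1)).card +
    (Finset.univ.filter (fun q : Fin n × Fin n => q.1 < q.2 ∧
      ¬ q.1.1 < (p q.1).1 ∧ ¬ q.2.1 < (p q.2).1 ∧ p q.2 < p q.1)).card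

/-- `ndes(σ) = des(σ) + neg(σ)`. -/
def ndes {n : ℕ} (σ : SignedPerm n) : ℕ := desB σ + negc σ

/-- `nmaj(σ) = maj(σ) − Σ_{σ(i)<0} σ(i)`. -/
def nmaj {n : ℕ} (σ : SignedPerm n) : ℤ :=
  (majB σ : ℤ) - ∑ i ∈ Finset.univ.filter (fun i => win σ i < 0), win σ i

/-- `fdes(σ) = 2des(σ) + [σ(1)<0]`. -/
def fdes {n : ℕ} (σ : SignedPerm n) : ℕ :=
  2 * desB σ + (if h : 0 < n then (if win σ ⟨0, h⟩ < 0 then 1 else 0) else 0)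

/-- `fmaj(σ) = 2maj(σ) + neg(σ)`. -/
def fmaj {n : ℕ} (σ : SignedPerm n) : ℕ := 2 * majB σ + negc σ

/-- Absolute excedance number `excabs(σ) = exc(|σ|) + neg(σ)`. -/
def excabs {n : ℕ} (σ : SignedPerm n) : ℕ := excP σ.1 + negc σ

/-- Negative Denert statistic `nden(σ) = denh(|σ|) − Σ_{σ(i)<0} σ(i)`. -/
def nden {n : ℕ} (σ : SignedPerm n) : ℤ :=
  (denhP σ.1 : ℤ) - ∑ i ∈ Finset.univ.filter (fun i => win σ i < 0), win σ i

/-- `DNeg(σ) = {i : σ(i) < −1}`. -/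
def dnegSet {n : ℕ} (σ : SignedPerm n) : Finset (Fin n) :=
  Finset.univ.filter (fun i => win σ i < -1)

def dneg {n : ℕ} (σ : SignedPerm n) : ℕ := (dnegSet σ).card

/-- `ddes(σ) = des(σ) + dneg(σ)`. -/
def ddes {n : ℕ} (σ : SignedPerm n) : ℕ := desB σ + dneg σ

/-- `dmaj(σ) = maj(σ) − Σ_{i∈DNeg(σ)} σ(i) − dneg(σ)`. -/
def dmaj {n : ℕ} (σ : SignedPerm n) : ℤ :=
  (majB σ : ℤ) - (∑ i ∈ dnegSet σ, win σ i) - dneg σ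

/-- `dexc(σ) = exc(|σ|) + dneg(σ)`. -/
def dexc {n : ℕ} (σ : SignedPerm n) : ℕ := excP σ.1 + dneg σ

/-- `dden(σ) = denh(|σ|) − Σ_{i∈DNeg(σ)} σ(i) − dneg(σ)`. -/
def dden {n : ℕ} (σ : SignedPerm n) : ℤ :=
  (denhP σ.1 : ℤ) - (∑ i ∈ dnegSet σ, win σ i) - dneg σ

/-- Right composition of a signed permutation `τ` with an unsigned permutation `π`:
the signed permutation with window `(τπ)(i) = τ(π(i))`. -/
def compR {n : ℕ} (τ : SignedPerm n) (π : Equiv.Perm (Fin n)) : SignedPerm n :=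
  (τ.1 * π, fun i => τ.2 (π i))

/-- for `τ ∈ T = {τ ∈ D_n : des(τ) = 0}` and `π ∈ S_n`, the statistics
`Σ_{i∈DNeg(τπ)} (τπ)(i)` and `dneg(τπ)` do not depend on `π`; moreover every `σ ∈ D_n`
is uniquely of the form `τπ` with `τ ∈ T`, `π ∈ S_n`. -/
-- aux
lemma win_compR {n : ℕ} (τ : SignedPerm n) (π : Equiv.Perm (Fin n)) (i : Fin n) :
    win (compR τ π) i = win τ (π i) := by
  simp [win, compR, Equiv.Perm.mul_apply]

lemma win_inj {n : ℕ} (σ : SignedPerm n) : Function.Injective (win σ) := by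
  intro i j h
  unfold win at h
  have hp : ∀ k : Fin n, (0:ℤ) < ((σ.1 k).1 : ℤ) + 1 := fun k => by positivity
  apply σ.1.injective
  by_cases hi : σ.2 i <;> by_cases hj : σ.2 j <;> simp [hi, hj] at h <;>
    [skip; (exact absurd h (by nlinarith [hp i, hp j])); (exact absurd h (by nlinarith [hp i, hp j])); skip] <;>
    exact Fin.ext (by omega)

lemma strictMono_of_desB : ∀ {n : ℕ} (τ : SignedPerm n), desB τ = 0 → StrictMono (win τ)
  | 0, τ, h => fun a => absurd a.2 (by omega)
  | (m+1), τ, h => by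
    rw [Fin.strictMono_iff_lt_succ]
    intro i
    have hne : win τ (Fin.castSucc i) ≠ win τ i.succ := fun he =>
      absurd (win_inj τ he) (by simp [Fin.ext_iff])
    have : (Fin.castSucc i) ∉ desSetB τ := by
      simp [desB, Finset.card_eq_zero] at h; simp [h]
    simp only [desSetB, Finset.mem_filter, Finset.mem_univ, true_and, not_exists] at this
    have h2 : (Fin.castSucc i).1 + 1 < m + 1 := by simp only [Fin.coe_castSucc]; omega
    have := this h2
    have hs : (⟨(Fin.castSucc i).1 + 1, h2⟩ : Fin (m+1)) = i.succ := rfl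
    rw [hs] at this
    exact (not_lt.mp this).lt_of_ne hne

lemma desB_of_strictMono {n : ℕ} (τ : SignedPerm n) (h : StrictMono (win τ)) :
    desB τ = 0 := by
  rw [desB, Finset.card_eq_zero, Finset.eq_empty_iff_forall_notMem]
  intro i hi
  simp only [desSetB, Finset.mem_filter, Finset.mem_univ, true_and] at hi
  obtain ⟨hlt, hd⟩ := hi
  exact absurd hd (not_lt.2 (h.monotone (by simp [Fin.le_def])))

theorem coset_decomposition (n : ℕ) :
    (∀ (τ : SignedPerm n), Even (negc τ) → desB τ = 0 → ∀ π : Equiv.Perm (Fin n),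
      (∑ i ∈ dnegSet (compR τ π), win (compR τ π) i = ∑ i ∈ dnegSet τ, win τ i) ∧
        dneg (compR τ π) = dneg τ) ∧
    (∀ σ : SignedPerm n, Even (negc σ) →
      ∃! tp : SignedPerm n × Equiv.Perm (Fin n),
        (Even (negc tp.1) ∧ desB tp.1 = 0) ∧ compR tp.1 tp.2 = σ) := by
  have hset : ∀ (τ : SignedPerm n) (π : Equiv.Perm (Fin n)),
      dnegSet (compR τ π) = (dnegSet τ).map π.symm.toEmbedding := by
    intro τ π
    ext i
    simp only [dnegSet, Finset.mem_map, Finset.mem_filter, Finset.mem_univ, true_and,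
      Equiv.coe_toEmbedding, win_compR]
    constructor
    · intro h; exact ⟨π i, h, by simp⟩
    · rintro ⟨j, hj, rfl⟩; simpa using hj
  constructor
  · intro τ _ _ π
    constructor
    · rw [hset, Finset.sum_map]
      exact Finset.sum_congr rfl (fun i _ => by simp [win_compR])
    · rw [dneg, dneg, hset, Finset.card_map]
  · intro σ _
    -- sort the window
    set f := win σ with hf
    set ρ := Tuple.sort f with hρ
    have hmono : Monotone (f ∘ ρ) := Tuple.monotone_sort f
    have hsm : StrictMono (f ∘ ρ) := hmono.strictMono_of_injective ((win_inj σ).comp ρ.injective)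
    refine ⟨⟨((σ.1 * ρ : Equiv.Perm (Fin n)), fun i => σ.2 (ρ i)), ρ⁻¹⟩, ⟨⟨?_, ?_⟩, ?_⟩, ?_⟩
    case _ =>
      -- Even negc
      have : negc ((σ.1 * ρ : Equiv.Perm (Fin n)), fun i => σ.2 (ρ i)) = negc σ := by
        unfold negc
        apply Finset.card_nbij' (fun i => ρ i) (fun j => ρ.symm j) <;>
          simp [win, Equiv.Perm.mul_apply, Set.MapsTo, Set.LeftInvOn, Set.RightInvOn]
      rw [this]; assumption
    case _ =>
      apply desB_of_strictMono
      have : win ((σ.1 * ρ : Equiv.Perm (Fin n)), fun i => σ.2 (ρ i)) = f ∘ ρ := by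
        funext i; simp [win, hf, Equiv.Perm.mul_apply, Function.comp]
      rw [this]; exact hsm
    case _ =>
      unfold compR
      refine Prod.ext ?_ ?_
      · show (σ.1 * ρ) * ρ⁻¹ = σ.1
        group
      · funext i
        show σ.2 (ρ (ρ⁻¹ i)) = σ.2 i
        simp
    case _ =>
      rintro ⟨τ', π'⟩ ⟨⟨_, hdes⟩, hcomp⟩
      -- win τ' strictly mono, and win τ' (π' i) = win σ i
      have hwin : ∀ i, win τ' (π' i) = f i := fun i => by
        rw [← win_compR, hcomp]
      have hsm' : StrictMono (win τ') := strictMono_of_desB τ' hdes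
      -- show π'⁻¹ = ρ, i.e. win τ' = f ∘ π'⁻¹ strictly mono
      haveI : WellFoundedLT (Fin n) := inferInstance
      have hcomp2 : f ∘ (π'⁻¹ : Equiv.Perm (Fin n)) = win τ' := by
        funext i; simpa using (hwin (π'⁻¹ i)).symm
      -- f ∘ π'⁻¹ strict mono and f ∘ ρ strict mono ⇒ π'⁻¹ = ρ
      have key : ∀ g : Equiv.Perm (Fin n), StrictMono (f ∘ g) → ∀ i, (g : Fin n → Fin n) i = ρ i := by
        intro g hg i
        -- ρ⁻¹ ∘ g strict mono
        have hinj : Function.Injective f := win_inj σ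
        have h1 : StrictMono (fun i => ρ.symm (g i)) := by
          intro a b hab
          have : f (g a) < f (g b) := hg hab
          have h2 : f (ρ (ρ.symm (g a))) < f (ρ (ρ.symm (g b))) := by simpa using this
          exact hsm.lt_iff_lt.mp h2
        have h2 : StrictMono (fun i => g.symm (ρ i)) := by
          intro a b hab
          have : f (ρ a) < f (ρ b) := hsm hab
          rw [← hcomp2] at *
          have ha : f (g (g.symm (ρ a))) < f (g (g.symm (ρ b))) := by simpa using this
          exact hg.lt_iff_lt.mp ha
        have hle1 : i ≤ ρ.symm (g i) := h1.le_apply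
        have hle2 : ρ.symm (g i) ≤ i := by
          have := h2.le_apply (x := ρ.symm (g i))
          simpa using this
        have : ρ.symm (g i) = i := le_antisymm hle2 hle1
        calc (g : Fin n → Fin n) i = ρ (ρ.symm (g i)) := by simp
          _ = ρ i := by rw [this]
      have hπ : (π'⁻¹ : Equiv.Perm (Fin n)) = ρ := by
        apply Equiv.ext
        intro i
        exact key π'⁻¹ (by rw [hcomp2]; exact hsm') i
      have hπ' : π' = ρ⁻¹ := by rw [← hπ]; simp
      have hτ1 : τ'.1 = σ.1 * ρ := by
        have h1 : τ'.1 * π' = σ.1 := congrArg Prod.fst hcomp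
        calc τ'.1 = (τ'.1 * π') * π'⁻¹ := by group
          _ = σ.1 * ρ := by rw [h1, hπ]
      have hτ2 : τ'.2 = fun i => σ.2 (ρ i) := by
        have h1 : (fun i => τ'.2 (π' i)) = σ.2 := congrArg Prod.snd hcomp
        funext j
        have := congrFun h1 (π'.symm j)
        simp only [Equiv.apply_symm_apply] at this
        rw [this]
        rw [show π'.symm = π'⁻¹ from rfl, hπ]
      refine Prod.ext ?_ hπ'
      exact Prod.ext hτ1 hτ2
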